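/- In the free group on h₁, l₂, …, l_m, the normal closure of the set of pencil relators {h₁ l_m ⋯ l₂ (l_m ⋯ l₂ h₁)⁻¹} ∪ {h₁ l_m ⋯ l₂ (l_k ⋯ l₂ h₁ l_m ⋯ l_{k+1})⁻¹ : 2 ≤ k ≤ m-1} equals the normal closure of the set {[h₁ l_m ⋯ l₂, l_k] : 2 ≤ k ≤ m}. -/

import Mathlib

/-- `dp l a b = l b * l (b-1) * ⋯ * l a` (the product in decreasing index order);
it is `1` when `b < a`. -/
def dp {G : Type*} [Group G] (l : ℕ → G) (a b : ℕ) : G :=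
  ((List.range' a (b + 1 - a)).reverse.map l).prod

/-- The commutator `[x, y] = x y x⁻¹ y⁻¹`. -/
def commr {G : Type*} [Group G] (x y : G) : G := x * y * x⁻¹ * y⁻¹

/-- The generating set `{h₁, …, h_n} ⊔ {l₂, …, l_m}`. -/
abbrev Gen (n m : ℕ) := Fin n ⊕ Fin (m - 1)

/-- The generator `h_j` (for `1 ≤ j ≤ n`). -/
def hgen (n m j : ℕ) : FreeGroup (Gen n m) :=
  if hj : j - 1 < n then FreeGroup.of (Sum.inl ⟨j - 1, hj⟩) else 1

/-- The generator `l_k` (for `2 ≤ k ≤ m`). -/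
def lgen (n m k : ℕ) : FreeGroup (Gen n m) :=
  if hk : k - 2 < m - 1 then FreeGroup.of (Sum.inr ⟨k - 2, hk⟩) else 1

lemma dp_eq_one {G : Type*} [Group G] (l : ℕ → G) {a b : ℕ} (h : b < a) : dp l a b = 1 := by
  have : b + 1 - a = 0 := by omega
  simp [dp, this]

lemma dp_single {G : Type*} [Group G] (l : ℕ → G) (a : ℕ) : dp l a a = l a := by
  have : a + 1 - a = 1 := by omega
  simp [dp, this]

lemma dp_split {G : Type*} [Group G] (l : ℕ → G) {a c b : ℕ} (h1 : a ≤ c + 1) (h2 : c ≤ b) :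
    dp l a b = dp l (c + 1) b * dp l a c := by
  unfold dp
  have hr : List.range' a (b + 1 - a) =
      List.range' a (c + 1 - a) ++ List.range' (c + 1) (b + 1 - (c + 1)) := by
    rw [show b + 1 - a = (b + 1 - (c + 1)) + (c + 1 - a) by omega]
    have h5 := List.range'_append (s := a) (m := c + 1 - a) (n := b + 1 - (c + 1)) (step := 1)
    rw [show a + 1 * (c + 1 - a) = c + 1 by omega] at h5
    rw [Nat.add_comm (c + 1 - a) (b + 1 - (c + 1))] at h5
    exact h5.symm
  rw [hr, List.reverse_append, List.map_append, List.prod_append]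

lemma commute_dp {G : Type*} [Group G] {c : G} (l : ℕ → G) {a b : ℕ}
    (h : ∀ k, a ≤ k → k ≤ b → Commute c (l k)) : Commute c (dp l a b) := by
  apply Commute.list_prod_right
  intro x hx
  simp only [List.mem_map, List.mem_reverse, List.mem_range'_1] at hx
  obtain ⟨k, ⟨hk1, hk2⟩, rfl⟩ := hx
  exact h k hk1 (by omega)

lemma map_dp {G H : Type*} [Group G] [Group H] (f : G →* H) (l : ℕ → G) (a b : ℕ) :
    f (dp l a b) = dp (fun k => f (l k)) a b := by
  unfold dp
  rw [map_list_prod, List.map_map]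
  rfl

lemma map_commr {G H : Type*} [Group G] [Group H] (f : G →* H) (x y : G) :
    f (commr x y) = commr (f x) (f y) := by
  simp [commr]

lemma commr_eq_one_of {G : Type*} [Group G] {a y X : G} (h1 : a = y * X) (h2 : a = X * y) :
    commr a y = 1 := by
  have key : a * y = y * a := by
    calc a * y = y * X * y := by rw [← h1]
    _ = y * (X * y) := by rw [mul_assoc]
    _ = y * a := by rw [← h2]
  unfold commr
  rw [key]
  group

/-- in the free group on `h₁, l₂, …, l_m`, the normal closure of the
pencil relators equals the normal closure of the commutators `[h₁ l_m ⋯ l₂, l_k]`,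
`2 ≤ k ≤ m`. -/
theorem stmt15 (m : ℕ) (hm : 2 ≤ m) :
    Subgroup.normalClosure
        ({hgen 1 m 1 * dp (lgen 1 m) 2 m * (dp (lgen 1 m) 2 m * hgen 1 m 1)⁻¹} ∪
          {r : FreeGroup (Gen 1 m) | ∃ k, 2 ≤ k ∧ k ≤ m - 1 ∧
            r = hgen 1 m 1 * dp (lgen 1 m) 2 m *
                  (dp (lgen 1 m) 2 k * hgen 1 m 1 * dp (lgen 1 m) (k + 1) m)⁻¹}) =
      Subgroup.normalClosure
        {r : FreeGroup (Gen 1 m) | ∃ k, 2 ≤ k ∧ k ≤ m ∧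
          r = commr (hgen 1 m 1 * dp (lgen 1 m) 2 m) (lgen 1 m k)} := by
  set h := hgen 1 m 1 with hh
  set l := lgen 1 m with hl
  apply le_antisymm
  · apply Subgroup.normalClosure_le_normal
    intro x hx
    rw [SetLike.mem_coe, ← QuotientGroup.eq_one_iff x]
    set N := Subgroup.normalClosure
        {r : FreeGroup (Gen 1 m) | ∃ k, 2 ≤ k ∧ k ≤ m ∧ r = commr (h * dp l 2 m) (l k)}
    let π : FreeGroup (Gen 1 m) →* FreeGroup (Gen 1 m) ⧸ N := QuotientGroup.mk' N
    have key : ∀ k, 2 ≤ k → k ≤ m → Commute (π (h * dp l 2 m)) (π (l k)) := by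
      intro k h2 hk
      have hmem : commr (h * dp l 2 m) (l k) ∈ N :=
        Subgroup.subset_normalClosure ⟨k, h2, hk, rfl⟩
      have h1 : π (commr (h * dp l 2 m) (l k)) = 1 := (QuotientGroup.eq_one_iff _).2 hmem
      rw [map_commr] at h1
      unfold commr at h1
      have := mul_eq_one_iff_eq_inv.mp h1
      rw [inv_inv] at this
      have := mul_inv_eq_iff_eq_mul.mp this
      exact this
    have key2 : ∀ a b, 2 ≤ a → b ≤ m → Commute (π (h * dp l 2 m)) (π (dp l a b)) := by
      intro a b ha hb
      rw [map_dp]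
      exact commute_dp _ (fun k hk1 hk2 => key k (le_trans ha hk1) (le_trans hk2 hb))
    rcases hx with hx | ⟨k, hk2, hkm, rfl⟩
    · rw [Set.mem_singleton_iff] at hx
      subst hx
      show π (h * dp l 2 m * (dp l 2 m * h)⁻¹) = 1
      rw [map_mul, map_mul, map_inv, map_mul]
      apply mul_inv_eq_one.mpr
      have c := (key2 2 m le_rfl le_rfl).eq
      rw [map_mul] at c
      exact mul_right_cancel (c.trans (mul_assoc _ _ _).symm)
    · show π (h * dp l 2 m * (dp l 2 k * h * dp l (k + 1) m)⁻¹) = 1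
      rw [map_mul, map_mul, map_inv, map_mul, map_mul]
      apply mul_inv_eq_one.mpr
      have hQ : π (dp l 2 m) = π (dp l (k + 1) m) * π (dp l 2 k) := by
        rw [← map_mul, ← dp_split l (by omega) (by omega)]
      have c := (key2 2 k le_rfl (by omega)).eq
      rw [map_mul, hQ] at c
      have e2 : π h * (π (dp l (k + 1) m) * π (dp l 2 k)) =
          π (dp l 2 k) * π h * π (dp l (k + 1) m) :=
        mul_right_cancel (b := π (dp l 2 k)) (by rw [c]; group)
      rw [hQ]
      exact e2
  · apply Subgroup.normalClosure_le_normal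
    intro x hx
    rw [SetLike.mem_coe, ← QuotientGroup.eq_one_iff x]
    set N := Subgroup.normalClosure
        ({h * dp l 2 m * (dp l 2 m * h)⁻¹} ∪
          {r : FreeGroup (Gen 1 m) | ∃ k, 2 ≤ k ∧ k ≤ m - 1 ∧
            r = h * dp l 2 m * (dp l 2 k * h * dp l (k + 1) m)⁻¹})
    let π : FreeGroup (Gen 1 m) →* FreeGroup (Gen 1 m) ⧸ N := QuotientGroup.mk' N
    have claim : ∀ j, 1 ≤ j → j ≤ m →
        π h * π (dp l 2 m) = π (dp l 2 j) * π h * π (dp l (j + 1) m) := by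
      intro j hj1 hjm
      by_cases hje : j = 1
      · subst hje
        rw [dp_eq_one l (a := 2) (b := 1) (by omega)]
        simp
      by_cases hjem : j = m
      · rw [hjem]
        have hmem : h * dp l 2 m * (dp l 2 m * h)⁻¹ ∈ N :=
          Subgroup.subset_normalClosure (Set.mem_union_left _ rfl)
        have h1 : π (h * dp l 2 m * (dp l 2 m * h)⁻¹) = 1 :=
          (QuotientGroup.eq_one_iff _).2 hmem
        rw [map_mul, map_mul, map_inv, map_mul, mul_inv_eq_one] at h1
        rw [dp_eq_one l (a := m + 1) (b := m) (by omega)]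
        simp [h1]
      · have hmem : h * dp l 2 m * (dp l 2 j * h * dp l (j + 1) m)⁻¹ ∈ N :=
          Subgroup.subset_normalClosure (Set.mem_union_right _ ⟨j, by omega, by omega, rfl⟩)
        have h1 : π (h * dp l 2 m * (dp l 2 j * h * dp l (j + 1) m)⁻¹) = 1 :=
          (QuotientGroup.eq_one_iff _).2 hmem
        rw [map_mul, map_mul, map_inv, map_mul, map_mul, mul_inv_eq_one] at h1
        exact h1
    obtain ⟨k, hk2, hkm, rfl⟩ := hx
    show π (commr (h * dp l 2 m) (l k)) = 1
    rw [map_commr]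
    have hk1 : k - 1 + 1 = k := by omega
    have e1 := claim k (by omega) hkm
    have e2 := claim (k - 1) (by omega) (by omega)
    rw [hk1] at e2
    -- dp l 2 k = l k * dp l 2 (k-1)
    have sA : π (dp l 2 k) = π (l k) * π (dp l 2 (k - 1)) := by
      rw [show dp l 2 k = dp l (k - 1 + 1) k * dp l 2 (k - 1) from
        dp_split l (by omega) (by omega), hk1, dp_single, map_mul]
    -- dp l k m = dp l (k+1) m * l k
    have sB : π (dp l k m) = π (dp l (k + 1) m) * π (l k) := by
      rw [show dp l k m = dp l (k + 1) m * dp l k k from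
        dp_split l (by omega) (by omega), dp_single, map_mul]
    apply commr_eq_one_of (X := π (dp l 2 (k - 1)) * π h * π (dp l (k + 1) m))
    · rw [map_mul, e1, sA]
      group
    · rw [map_mul, e2, sB]
      group
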